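/- Let p = (1/2, 2/5, 1/10) and q = (3/5, 1/4, 3/20) be probability vectors on Fin 3. Then ¬(p ≺ q), ¬(q ≺ p), and moreover for every m ≥ 1 and every probability vector r on Fin m, ¬(p ⊗ r ≺ q ⊗ r); that is, no catalyst enables the deterministic incoherent transformation from p to q. -/
import Mathlib


open Finset

/-- max over finsets of card k of the sum of entries -/
noncomputable def maxSum {ι : Type*} [Fintype ι] (p : ι → ℝ) (k : ℕ) : ℝ :=
  sSup {x : ℝ | ∃ S : Finset ι, S.card = k ∧ x = ∑ i ∈ S, p i}

/-- majorization: equal total sums, and for each k the max k-term partial sum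
of `p` is at most that of `q`. -/
def Maj {ι : Type*} [Fintype ι] (p q : ι → ℝ) : Prop :=
  (∑ i, p i = ∑ i, q i) ∧ ∀ k : ℕ, maxSum p k ≤ maxSum q k

/-- a probability vector: nonnegative entries summing to one -/
def IsProbVec {ι : Type*} [Fintype ι] (p : ι → ℝ) : Prop :=
  (∀ i, 0 ≤ p i) ∧ ∑ i, p i = 1

/-- tensor product of two vectors -/
def tensor {ι κ : Type*} (p : ι → ℝ) (r : κ → ℝ) : ι × κ → ℝ :=
  fun x => p x.1 * r x.2

lemma maxSum_bdd {ι : Type*} [Fintype ι] (p : ι → ℝ) (k : ℕ) :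
    BddAbove {x : ℝ | ∃ S : Finset ι, S.card = k ∧ x = ∑ i ∈ S, p i} := by
  apply Set.Finite.bddAbove
  apply Set.Finite.subset (Set.finite_range (fun S : Finset ι => ∑ i ∈ S, p i))
  rintro x ⟨S, -, rfl⟩
  exact ⟨S, rfl⟩

lemma le_maxSum {ι : Type*} [Fintype ι] (p : ι → ℝ) {k : ℕ} (S : Finset ι)
    (h : S.card = k) : ∑ i ∈ S, p i ≤ maxSum p k :=
  le_csSup (maxSum_bdd p k) ⟨S, h, rfl⟩

lemma maxSum_le {ι : Type*} [Fintype ι] (p : ι → ℝ) {k : ℕ} {c : ℝ}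
    (S0 : Finset ι) (h0 : S0.card = k)
    (h : ∀ S : Finset ι, S.card = k → ∑ i ∈ S, p i ≤ c) : maxSum p k ≤ c :=
  csSup_le ⟨_, S0, h0, rfl⟩ (by rintro x ⟨S, hS, rfl⟩; exact h S hS)

/-- A pair of incomparable diagonal distributions for which no catalyst can
enable the deterministic incoherent transformation. -/
theorem no_catalyst_example :
    ¬ Maj (![1/2, 2/5, 1/10] : Fin 3 → ℝ) (![3/5, 1/4, 3/20] : Fin 3 → ℝ) ∧
    ¬ Maj (![3/5, 1/4, 3/20] : Fin 3 → ℝ) (![1/2, 2/5, 1/10] : Fin 3 → ℝ) ∧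
    ∀ m : ℕ, 1 ≤ m → ∀ r : Fin m → ℝ, IsProbVec r →
      ¬ Maj (tensor (![1/2, 2/5, 1/10] : Fin 3 → ℝ) r)
            (tensor (![3/5, 1/4, 3/20] : Fin 3 → ℝ) r) := by
  set p : Fin 3 → ℝ := ![1/2, 2/5, 1/10] with hp
  set q : Fin 3 → ℝ := ![3/5, 1/4, 3/20] with hq
  have hpval : p 0 = 1/2 ∧ p 1 = 2/5 ∧ p 2 = 1/10 := by
    refine ⟨?_, ?_, ?_⟩ <;> simp [hp]
  have hqval : q 0 = 3/5 ∧ q 1 = 1/4 ∧ q 2 = 3/20 := by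
    refine ⟨?_, ?_, ?_⟩ <;> simp [hq]
  have hqlb : ∀ i : Fin 3, (3/20 : ℝ) ≤ q i := by
    intro i; fin_cases i <;> simp [hq] <;> norm_num
  have hqnn : ∀ i : Fin 3, (0 : ℝ) ≤ q i := fun i => le_trans (by norm_num) (hqlb i)
  have hpsum : ∑ i, p i = 1 := by
    rw [Fin.sum_univ_three, hpval.1, hpval.2.1, hpval.2.2]; norm_num
  have hqsum : ∑ i, q i = 1 := by
    rw [Fin.sum_univ_three, hqval.1, hqval.2.1, hqval.2.2]; norm_num
  refine ⟨?_, ?_, ?_⟩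
  · rintro ⟨-, h⟩
    have h1 : (9/10 : ℝ) ≤ maxSum p 2 := by
      have := le_maxSum p ({0, 1} : Finset (Fin 3)) (show ({0,1} : Finset (Fin 3)).card = 2 by decide)
      rwa [Finset.sum_pair (by decide), hpval.1, hpval.2.1, show
        (1:ℝ)/2 + 2/5 = 9/10 by norm_num] at this
    have h2 : maxSum q 2 ≤ 17/20 := by
      refine maxSum_le q ({0, 1} : Finset (Fin 3)) (show ({0,1} : Finset (Fin 3)).card = 2 by decide) ?_
      intro S hS
      have hcompl : Sᶜ.card = 1 := by
        rw [Finset.card_compl, hS]; rfl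
      obtain ⟨i, hi⟩ := Finset.card_eq_one.mp hcompl
      have hsplit : ∑ j ∈ S, q j + ∑ j ∈ Sᶜ, q j = 1 := by
        rw [Finset.sum_add_sum_compl, hqsum]
      rw [hi, Finset.sum_singleton] at hsplit
      have := hqlb i
      linarith
    linarith [h 2]
  · rintro ⟨-, h⟩
    have h1 : (3/5 : ℝ) ≤ maxSum q 1 := by
      have := le_maxSum q ({0} : Finset (Fin 3)) (show ({0} : Finset (Fin 3)).card = 1 by decide)
      rwa [Finset.sum_singleton, hqval.1] at this
    have h2 : maxSum p 1 ≤ 1/2 := by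
      refine maxSum_le p ({0} : Finset (Fin 3)) (show ({0} : Finset (Fin 3)).card = 1 by decide) ?_
      intro S hS
      obtain ⟨i, hi⟩ := Finset.card_eq_one.mp hS
      rw [hi, Finset.sum_singleton]
      fin_cases i <;> simp [hp] <;> norm_num
    linarith [h 1]
  · intro m hm r hr
    rintro ⟨-, hmaj⟩
    obtain ⟨hr0, hr1⟩ := hr
    set T : Finset (Fin m) := Finset.univ.filter (fun j => 0 < r j) with hT
    have hmemT : ∀ j, j ∈ T ↔ 0 < r j := by
      intro j; simp [hT]
    have hsumT : ∑ j ∈ T, r j = 1 := by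
      rw [hT, Finset.sum_filter_of_ne (fun x _ hx => lt_of_le_of_ne (hr0 x) (Ne.symm hx))]
      exact hr1
    have hTne : T.Nonempty := by
      by_contra hne
      rw [Finset.not_nonempty_iff_eq_empty] at hne
      rw [hne, Finset.sum_empty] at hsumT
      norm_num at hsumT
    set t : ℝ := T.inf' hTne r with ht
    have htpos : 0 < t := by
      rw [ht, Finset.lt_inf'_iff]
      intro b hb
      exact (hmemT b).mp hb
    have htle : ∀ j ∈ T, t ≤ r j := fun j hj => Finset.inf'_le r hj
    obtain ⟨j0, hj0T, hj0⟩ := T.exists_mem_eq_inf' hTne r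
    set Supp : Finset (Fin 3 × Fin m) := Finset.univ ×ˢ T with hSupp
    have hSuppcard : Supp.card = 3 * T.card := by
      rw [hSupp, Finset.card_product]
      simp
    have hscard : 1 ≤ T.card := Finset.card_pos.mpr hTne
    have hsumSupp : ∀ v : Fin 3 → ℝ, ∑ x ∈ Supp, v x.1 * r x.2 = ∑ i, v i := by
      intro v
      rw [hSupp, Finset.sum_product]
      simp_rw [← Finset.mul_sum, hsumT, mul_one]
    set k : ℕ := 3 * T.card - 1 with hk
    have hmem2 : ((2 : Fin 3), j0) ∈ Supp := by
      rw [hSupp, Finset.mem_product]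
      exact ⟨Finset.mem_univ _, hj0T⟩
    set S0 : Finset (Fin 3 × Fin m) := Supp.erase (2, j0) with hS0
    have hS0card : S0.card = k := by
      rw [hS0, Finset.card_erase_of_mem hmem2, hSuppcard]
    -- lower bound for maxSum (tensor p r) k
    have hlow : 1 - t / 10 ≤ maxSum (tensor p r) k := by
      have hle := le_maxSum (tensor p r) S0 hS0card
      have hsum0 : ∑ x ∈ S0, tensor p r x = 1 - t / 10 := by
        rw [hS0, Finset.sum_erase_eq_sub hmem2]
        have : ∑ x ∈ Supp, tensor p r x = 1 := by
          rw [show ∑ x ∈ Supp, tensor p r x = ∑ x ∈ Supp, p x.1 * r x.2 from rfl,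
            hsumSupp, hpsum]
        rw [this]
        show (1 : ℝ) - p 2 * r j0 = 1 - t / 10
        rw [hpval.2.2, ← hj0, ← ht]
        ring
      rwa [hsum0] at hle
    -- upper bound for maxSum (tensor q r) k
    have hqSupp : ∑ x ∈ Supp, tensor q r x = 1 := by
      rw [show ∑ x ∈ Supp, tensor q r x = ∑ x ∈ Supp, q x.1 * r x.2 from rfl,
        hsumSupp, hqsum]
    have hhigh : maxSum (tensor q r) k ≤ 1 - (3/20) * t := by
      refine maxSum_le (tensor q r) S0 hS0card ?_
      intro S hS
      set S' : Finset (Fin 3 × Fin m) := S.filter (fun x => 0 < r x.2) with hS'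
      have hfilter : ∑ x ∈ S, tensor q r x = ∑ x ∈ S', tensor q r x := by
        rw [hS']
        refine (Finset.sum_filter_of_ne ?_).symm
        intro x _ hx
        rcases lt_or_eq_of_le (hr0 x.2) with h | h
        · exact h
        · exact absurd (by show q x.1 * r x.2 = 0; rw [← h, mul_zero]) hx
      have hsub : S' ⊆ Supp := by
        intro x hx
        rw [hS', Finset.mem_filter] at hx
        rw [hSupp, Finset.mem_product]
        exact ⟨Finset.mem_univ _, (hmemT x.2).mpr hx.2⟩
      have hlt : S'.card < Supp.card := by
        calc S'.card ≤ S.card := Finset.card_filter_le _ _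
          _ = k := hS
          _ < 3 * T.card := by
              rw [hk]
              exact Nat.sub_lt (by omega) one_pos
          _ = Supp.card := hSuppcard.symm
      obtain ⟨x, hxSupp, hxS'⟩ : ∃ x ∈ Supp, x ∉ S' := by
        by_contra hc
        push_neg at hc
        exact absurd (Finset.card_le_card hc) (not_le.mpr hlt)
      have hsub' : S' ⊆ Supp.erase x := fun y hy =>
        Finset.mem_erase.mpr ⟨fun h => hxS' (h ▸ hy), hsub hy⟩
      have htnn : ∀ y ∈ Supp.erase x, y ∉ S' → 0 ≤ tensor q r y := by
        intro y _ _
        exact mul_nonneg (hqnn y.1) (hr0 y.2)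
      have hle1 : ∑ y ∈ S', tensor q r y ≤ ∑ y ∈ Supp.erase x, tensor q r y :=
        Finset.sum_le_sum_of_subset_of_nonneg hsub' htnn
      have hle2 : ∑ y ∈ Supp.erase x, tensor q r y = 1 - q x.1 * r x.2 := by
        rw [Finset.sum_erase_eq_sub hxSupp, hqSupp]; rfl
      have hx2T : x.2 ∈ T := by
        rw [hSupp, Finset.mem_product] at hxSupp
        exact hxSupp.2
      have hbound : (3/20 : ℝ) * t ≤ q x.1 * r x.2 :=
        mul_le_mul (hqlb x.1) (htle x.2 hx2T) (le_of_lt htpos) (hqnn x.1)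
      rw [hfilter]
      linarith
    have := hmaj k
    linarith
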